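/- Let p be a prime, G a finite p-group, and M = F_p[G]^λ ⊕ N a finitely generated left F_p[G]-module, where N is a torsion F_p[G]-module and λ ∈ ℕ. Then the image T_G·M of multiplication by T_G on M is an F_p-vector space of dimension λ, i.e. T_G·M ≅ F_p^λ. -/

import Mathlib

/-- `T_G = Σ_{g ∈ G} g` in the group algebra `F_p[G]`. -/
noncomputable def sumTG (p : ℕ) (G : Type) [Group G] [Fintype G] :
    MonoidAlgebra (ZMod p) G :=
  ∑ g : G, MonoidAlgebra.single g (1 : ZMod p)

section Aux

variable (p : ℕ) [Fact p.Prime] (G : Type) [Group G] [Fintype G]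

lemma sumTG_apply (h : G) : (sumTG p G).coeff h = 1 := by
  classical
  rw [sumTG, MonoidAlgebra.coeff_sum, Finsupp.finset_sum_apply]
  simp [Finsupp.single_apply]

lemma sumTG_ne_zero : sumTG p G ≠ 0 := by
  intro h
  have := sumTG_apply p G 1
  rw [h] at this
  simp at this

lemma sumTG_mul (β : MonoidAlgebra (ZMod p) G) :
    sumTG p G * β = (∑ g : G, β.coeff g) • sumTG p G := by
  classical
  induction β using MonoidAlgebra.induction_linear with
  | zero => simp
  | add f g hf hg =>
      rw [mul_add, hf, hg, ← add_smul, ← Finset.sum_add_distrib]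
      rfl
  | single h c =>
      have h1 : ∑ g : G, (MonoidAlgebra.single h c : MonoidAlgebra (ZMod p) G).coeff g = c := by
        simp [Finsupp.single_apply]
      rw [h1, sumTG, Finset.sum_mul, Finset.smul_sum]
      rw [Fintype.sum_equiv (Equiv.mulRight h)
        (fun g => MonoidAlgebra.single g (1 : ZMod p) * MonoidAlgebra.single h c)
        (fun g => c • MonoidAlgebra.single g (1 : ZMod p))
        (fun g => by
          show MonoidAlgebra.single g (1 : ZMod p) * MonoidAlgebra.single h c =
            c • MonoidAlgebra.single ((Equiv.mulRight h) g) (1 : ZMod p)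
          rw [MonoidAlgebra.single_mul_single]
          simp [MonoidAlgebra.smul_single, Equiv.coe_mulRight])]

/-- Every nonzero left ideal of `F_p[G]` contains `T_G`. -/
lemma exists_mul_eq_sumTG (hG : IsPGroup p G) {α : MonoidAlgebra (ZMod p) G} (hα : α ≠ 0) :
    ∃ β : MonoidAlgebra (ZMod p) G, β * α = sumTG p G := by
  classical
  haveI : Finite (MonoidAlgebra (ZMod p) G) := Finite.of_injective _ MonoidAlgebra.coeff_injective
  let I : Submodule (MonoidAlgebra (ZMod p) G) (MonoidAlgebra (ZMod p) G) :=
    Submodule.span (MonoidAlgebra (ZMod p) G) {α}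
  letI : SMul G I := ⟨fun g x => ⟨MonoidAlgebra.single g (1 : ZMod p) * x.1,
    by simpa [smul_eq_mul] using I.smul_mem (MonoidAlgebra.single g (1 : ZMod p)) x.2⟩⟩
  have smul_def : ∀ (g : G) (x : I), (g • x).1 = MonoidAlgebra.single g (1 : ZMod p) * x.1 :=
    fun _ _ => rfl
  letI : MulAction G I :=
    { one_smul := fun x => by
        apply Subtype.ext
        rw [smul_def]
        rw [← MonoidAlgebra.one_def, one_mul]
      mul_smul := fun g h x => by
        apply Subtype.ext
        rw [smul_def, smul_def, smul_def, ← mul_assoc, MonoidAlgebra.single_mul_single, mul_one] }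
  have hα' : α ∈ I := Submodule.mem_span_singleton_self α
  -- p divides the cardinality of I
  have hord : addOrderOf (⟨α, hα'⟩ : I) = p := by
    have h1 : p • (⟨α, hα'⟩ : I) = 0 := by
      apply Subtype.ext
      show p • α = 0
      rw [← Nat.cast_smul_eq_nsmul (ZMod p), ZMod.natCast_self, zero_smul]
    have h2 : addOrderOf (⟨α, hα'⟩ : I) ∣ p := addOrderOf_dvd_of_nsmul_eq_zero h1
    rcases (Nat.Prime.eq_one_or_self_of_dvd (Fact.out) _ h2) with h | h
    · exfalso
      have := AddMonoid.addOrderOf_eq_one_iff.mp h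
      exact hα (congrArg Subtype.val this)
    · exact h
  have hcard : p ∣ Nat.card I := by
    have := addOrderOf_dvd_natCard (⟨α, hα'⟩ : I)
    rwa [hord] at this
  have h0fix : (0 : I) ∈ MulAction.fixedPoints G I := by
    intro g
    apply Subtype.ext
    rw [smul_def]
    exact mul_zero _
  obtain ⟨b, hbfix, hb0⟩ := hG.exists_fixed_point_of_prime_dvd_card_of_fixed_point (α := I) hcard h0fix
  -- b is a nonzero fixed point: its coefficients are constant
  have hconst : ∀ h : G, (b : MonoidAlgebra (ZMod p) G).coeff h = (b : MonoidAlgebra (ZMod p) G).coeff 1 := by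
    intro h
    have := congrArg Subtype.val (hbfix h)
    rw [smul_def] at this
    calc (b : MonoidAlgebra (ZMod p) G).coeff h = (MonoidAlgebra.single h (1 : ZMod p) * (b : MonoidAlgebra (ZMod p) G)).coeff h := by rw [this]
      _ = (b : MonoidAlgebra (ZMod p) G).coeff 1 := by rw [MonoidAlgebra.coeff_single_mul_apply]; simp
  have hc : (b : MonoidAlgebra (ZMod p) G).coeff 1 ≠ 0 := by
    intro hc
    apply hb0
    apply Subtype.ext
    show (0 : MonoidAlgebra (ZMod p) G) = (b : MonoidAlgebra (ZMod p) G)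
    ext h
    rw [hconst h, hc]
    rfl
  -- b = (b 1) • sumTG
  have hbT : (((b : MonoidAlgebra (ZMod p) G).coeff 1)⁻¹ : ZMod p) • (b : MonoidAlgebra (ZMod p) G) = sumTG p G := by
    ext h
    rw [MonoidAlgebra.coeff_smul_apply, hconst h, sumTG_apply, smul_eq_mul, inv_mul_cancel₀ hc]
  obtain ⟨β, hβ⟩ := Submodule.mem_span_singleton.mp b.2
  rw [smul_eq_mul] at hβ
  refine ⟨(((b : MonoidAlgebra (ZMod p) G).coeff 1)⁻¹ : ZMod p) • β, ?_⟩
  rw [smul_mul_assoc, hβ]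
  exact hbT

end Aux

/-- for a finite `p`-group `G` and a finitely generated module
`M = F_p[G]^λ ⊕ N` with `N` torsion, the image `T_G · M` is an `F_p`-vector space
of dimension `λ`. -/
theorem TG_image_finrank
    (p : ℕ) [Fact p.Prime] (G : Type) [Group G] [Fintype G] (hG : IsPGroup p G)
    (lam : ℕ) (N : Type) [AddCommGroup N]
    [Module (MonoidAlgebra (ZMod p) G) N]
    [Module (ZMod p) N] [IsScalarTower (ZMod p) (MonoidAlgebra (ZMod p) G) N]
    [Module.Finite (MonoidAlgebra (ZMod p) G) N]
    (hN : ∀ n : N, ∃ α : MonoidAlgebra (ZMod p) G, α ≠ 0 ∧ α • n = 0) :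
    Module.finrank (ZMod p)
      (Submodule.span (ZMod p)
        (Set.range fun m : (Fin lam → MonoidAlgebra (ZMod p) G) × N =>
          sumTG p G • m)) = lam := by
  classical
  set A := MonoidAlgebra (ZMod p) G with hA
  set T := sumTG p G with hT
  have hTn : ∀ n : N, T • n = 0 := by
    intro n
    obtain ⟨α, hα, hαn⟩ := hN n
    obtain ⟨β, hβ⟩ := exists_mul_eq_sumTG p G hG hα
    rw [hT, ← hβ, mul_smul, hαn, smul_zero]
  let L : (Fin lam → ZMod p) →ₗ[ZMod p] (Fin lam → A) × N :=
    { toFun := fun c => (fun i => c i • T, 0)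
      map_add' := fun c d => by
        ext i <;> simp [add_smul]
      map_smul' := fun r c => by
        ext i <;> simp [smul_smul] }
  have hset : (Set.range fun m : (Fin lam → A) × N => T • m) = ↑(LinearMap.range L) := by
    ext x
    constructor
    · rintro ⟨⟨f, n⟩, rfl⟩
      refine ⟨fun i => ∑ g : G, (f i).coeff g, ?_⟩
      show ((fun i => (∑ g : G, (f i).coeff g) • T, 0) : (Fin lam → A) × N) = T • (f, n)
      refine Prod.ext ?_ ?_
      · funext i
        show (∑ g : G, (f i).coeff g) • T = T * f i
        rw [hT, sumTG_mul]
      · exact (hTn n).symm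
    · rintro ⟨c, rfl⟩
      refine ⟨((fun i => MonoidAlgebra.single (1 : G) (c i)), 0), ?_⟩
      show T • ((fun i => MonoidAlgebra.single (1 : G) (c i)), (0 : N)) = (fun i => c i • T, 0)
      refine Prod.ext ?_ ?_
      · funext i
        show T * MonoidAlgebra.single (1 : G) (c i) = c i • T
        rw [hT, sumTG_mul]
        congr 1
        simp [Finsupp.single_apply]
      · exact smul_zero T
  rw [hset, Submodule.span_coe_eq_restrictScalars, Submodule.restrictScalars_self]
  have hinj : Function.Injective L := by
    rw [← LinearMap.ker_eq_bot]
    ext c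
    simp only [LinearMap.mem_ker, Submodule.mem_bot]
    constructor
    · intro hc
      have h1 : ∀ i, c i • T = 0 := fun i => congrFun (congrArg Prod.fst hc) i
      funext i
      have := h1 i
      rcases smul_eq_zero.mp this with h | h
      · exact h
      · exact absurd h (sumTG_ne_zero p G)
    · rintro rfl
      ext i <;> simp [L]
  rw [LinearMap.finrank_range_of_inj hinj, Module.finrank_fin_fun]
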